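/- Fix j ∈ {1,…,ℓ}. Let D = (g; f_1,…,f_ℓ) be a multiple Riordan array with f_j = t·g and E = (G; F_1,…,F_ℓ) a multiple Riordan array with F_j = t·G, let h be an ℓ-th root of f_1⋯f_ℓ, and let q_i ∈ K[[t]] satisfy f_i = q_i·h for i = 1,…,ℓ. Then the matrix product of D and E equals the multiple Riordan array ( g·G(h); q_1·F_1(h), …, q_ℓ·F_ℓ(h) ), and its j-th multiplier satisfies q_j·F_j(h) = t·( g·G(h) ). Hence the product of two j-th Bell arrays is again a j-th Bell array (the j-th Bell arrays form a subgroup of the multiple Riordan group). -/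

import Mathlib

open PowerSeries Finset

/-- Formal substitution `F(u)`: for `u` with zero constant term, the `n`-th coefficient of
`F(u)` is `∑_{k ≤ n} F_k · [t^n] u^k`. -/
noncomputable def psComp {K : Type*} [CommRing K] (F u : K⟦X⟧) : K⟦X⟧ :=
  PowerSeries.mk fun n => ∑ k ∈ Finset.range (n + 1), coeff (R := K) k F * coeff (R := K) n (u ^ k)

section Aux
variable {K : Type*} [CommRing K]

lemma coeff_pow_eq_zero' {u : K⟦X⟧} (hu : constantCoeff (R := K) u = 0) {n k : ℕ} (hnk : n < k) :
    coeff (R := K) n (u ^ k) = 0 := by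
  have hdvd : (X : K⟦X⟧) ^ k ∣ u ^ k := pow_dvd_pow_of_dvd (X_dvd_iff.mpr hu) k
  exact (X_pow_dvd_iff.mp hdvd) n hnk

lemma coeff_aeval {u : K⟦X⟧} (hu : constantCoeff (R := K) u = 0) (p : Polynomial K) (n : ℕ) :
    coeff (R := K) n (Polynomial.aeval u p) = ∑ k ∈ range (n + 1), p.coeff k * coeff (R := K) n (u ^ k) := by
  rw [Polynomial.aeval_eq_sum_range, map_sum]
  simp_rw [LinearMap.map_smul, smul_eq_mul]
  rcases le_total (p.natDegree + 1) (n + 1) with hle | hle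
  · apply Finset.sum_subset (Finset.range_subset_range.mpr hle)
    intro k _ hk
    rw [Polynomial.coeff_eq_zero_of_natDegree_lt (by simpa using hk), zero_mul]
  · symm
    apply Finset.sum_subset (Finset.range_subset_range.mpr hle)
    intro k _ hk
    rw [coeff_pow_eq_zero' hu (by simpa using hk), mul_zero]

lemma coeff_psComp_eq {u : K⟦X⟧} (hu : constantCoeff (R := K) u = 0) (F : K⟦X⟧) {n N : ℕ} (hn : n < N) :
    coeff (R := K) n (psComp F u) = coeff (R := K) n (Polynomial.aeval u (trunc N F)) := by
  rw [coeff_aeval hu, psComp, coeff_mk]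
  refine Finset.sum_congr rfl fun k hk => ?_
  simp only [mem_range] at hk
  rw [coeff_trunc, if_pos (by omega)]

lemma psComp_mul {u : K⟦X⟧} (hu : constantCoeff (R := K) u = 0) (A B : K⟦X⟧) :
    psComp (A * B) u = psComp A u * psComp B u := by
  ext n
  set N := n + 1 with hN
  have key : coeff (R := K) n (Polynomial.aeval u (trunc N (A * B)))
      = coeff (R := K) n (Polynomial.aeval u (trunc N A * trunc N B)) := by
    rw [coeff_aeval hu, coeff_aeval hu]
    refine Finset.sum_congr rfl fun k hk => ?_
    simp only [mem_range] at hk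
    congr 1
    rw [coeff_trunc, if_pos (by omega), PowerSeries.coeff_mul, Polynomial.coeff_mul]
    refine Finset.sum_congr rfl fun p hp => ?_
    rw [Finset.HasAntidiagonal.mem_antidiagonal] at hp
    rw [PowerSeries.coeff_trunc, PowerSeries.coeff_trunc, if_pos (by omega), if_pos (by omega)]
  rw [coeff_psComp_eq hu _ (Nat.lt_succ_self n), key, map_mul, PowerSeries.coeff_mul,
    PowerSeries.coeff_mul]
  refine Finset.sum_congr rfl fun p hp => ?_
  rw [Finset.HasAntidiagonal.mem_antidiagonal] at hp
  rw [coeff_psComp_eq hu A (show p.1 < N by omega), coeff_psComp_eq hu B (show p.2 < N by omega)]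

lemma psComp_one (u : K⟦X⟧) : psComp 1 u = 1 := by
  ext n
  rw [psComp, coeff_mk]
  rw [Finset.sum_eq_single 0]
  · simp
  · intro k _ hk
    rw [coeff_one, if_neg hk, zero_mul]
  · intro hmem
    simp at hmem

lemma psComp_X {u : K⟦X⟧} (hu : constantCoeff (R := K) u = 0) : psComp X u = u := by
  ext n
  rw [psComp, coeff_mk]
  rcases Nat.eq_zero_or_pos n with rfl | hn
  · simp [coeff_zero_eq_constantCoeff, hu]
  · rw [Finset.sum_eq_single 1]
    · simp
    · intro k _ hk
      rw [coeff_X, if_neg hk, zero_mul]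
    · intro hmem
      simp at hmem
      omega

noncomputable def psCompHom (u : K⟦X⟧) (hu : constantCoeff (R := K) u = 0) : K⟦X⟧ →+* K⟦X⟧ where
  toFun F := psComp F u
  map_one' := psComp_one u
  map_mul' A B := psComp_mul hu A B
  map_zero' := by ext n; simp [psComp]
  map_add' A B := by ext n; simp [psComp, add_mul, Finset.sum_add_distrib]

def Supp (ℓ r : ℕ) (A : K⟦X⟧) : Prop := ∀ n, n % ℓ ≠ r % ℓ → coeff (R := K) n A = 0

lemma Supp.congr' {ℓ a b : ℕ} {A : K⟦X⟧} (hab : a % ℓ = b % ℓ) (hA : Supp ℓ a A) :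
    Supp ℓ b A := fun n hn => hA n (by rw [hab]; exact hn)

lemma Supp.mul {ℓ a b : ℕ} {A B : K⟦X⟧} (hA : Supp ℓ a A) (hB : Supp ℓ b B) :
    Supp ℓ (a + b) (A * B) := by
  intro n hn
  rw [PowerSeries.coeff_mul]
  apply Finset.sum_eq_zero
  intro p hp
  rw [Finset.HasAntidiagonal.mem_antidiagonal] at hp
  by_cases h1 : p.1 % ℓ = a % ℓ
  · by_cases h2 : p.2 % ℓ = b % ℓ
    · exact absurd (by rw [← hp, Nat.add_mod, h1, h2, ← Nat.add_mod]) hn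
    · rw [hB _ h2, mul_zero]
  · rw [hA _ h1, zero_mul]

lemma Supp.one {ℓ : ℕ} : Supp ℓ 0 (1 : K⟦X⟧) := by
  intro n hn
  rw [coeff_one, if_neg]
  rintro rfl
  exact hn rfl

lemma Supp.pow {ℓ : ℕ} {A : K⟦X⟧} (hA : Supp ℓ 0 A) (Q : ℕ) : Supp ℓ 0 (A ^ Q) := by
  induction Q with
  | zero => simpa using Supp.one
  | succ Q ih =>
      rw [pow_succ]
      exact (ih.mul hA).congr' rfl

lemma Supp.prodF {ℓ : ℕ} {F : ℕ → K⟦X⟧} (hF : ∀ i < ℓ, Supp ℓ 1 (F i)) :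
    ∀ m ≤ ℓ, Supp ℓ m (∏ i ∈ range m, F i) := by
  intro m hm
  induction m with
  | zero => simpa using Supp.one
  | succ m ih =>
      rw [Finset.prod_range_succ]
      exact ((ih (by omega)).mul (hF m (by omega))).congr' rfl

lemma coeff_mul_congr_right {A S S' : K⟦X⟧} {n : ℕ}
    (hS : ∀ r ≤ n, coeff (R := K) r S = coeff (R := K) r S') :
    coeff (R := K) n (A * S) = coeff (R := K) n (A * S') := by
  rw [PowerSeries.coeff_mul, PowerSeries.coeff_mul]
  refine Finset.sum_congr rfl fun p hp => ?_
  rw [Finset.HasAntidiagonal.mem_antidiagonal] at hp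
  rw [hS p.2 (by omega)]

end Aux

/-- Entry `d_{n,k}` of the multiple Riordan array `(g; f_0, …, f_{ℓ-1})`: the `k`-th column,
`k = qℓ + m`, has generating function `g · f_0⋯f_{m-1} · (f_0⋯f_{ℓ-1})^q`. -/
noncomputable def mrEntry {K : Type*} [CommRing K] (ℓ : ℕ) (g : K⟦X⟧) (f : ℕ → K⟦X⟧)
    (n k : ℕ) : K :=
  coeff (R := K) n (g * (∏ i ∈ Finset.range (k % ℓ), f i) * (∏ i ∈ Finset.range ℓ, f i) ^ (k / ℓ))

/-- The product of two `j`-th Bell arrays is a `j`-th Bell array: the `j`-th Bell arrays form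
a subgroup of the multiple Riordan group.  (Here the multipliers are indexed `0, …, ℓ-1`,
so index `j` corresponds to the `(j+1)`-st multiplier.) -/
theorem stmt5 {K : Type*} [Field K] [CharZero K] (ℓ : ℕ) (hℓ : 2 ≤ ℓ)
    (j : ℕ) (hj : j < ℓ)
    (g G : K⟦X⟧) (f F : ℕ → K⟦X⟧)
    (hg : ∀ n, ¬ (ℓ ∣ n) → coeff (R := K) n g = 0) (hg0 : constantCoeff (R := K) g ≠ 0)
    (hf : ∀ i < ℓ, ∀ n, n % ℓ ≠ 1 → coeff (R := K) n (f i) = 0)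
    (hf1 : ∀ i < ℓ, coeff (R := K) 1 (f i) ≠ 0)
    (hG : ∀ n, ¬ (ℓ ∣ n) → coeff (R := K) n G = 0) (hG0 : constantCoeff (R := K) G ≠ 0)
    (hF : ∀ i < ℓ, ∀ n, n % ℓ ≠ 1 → coeff (R := K) n (F i) = 0)
    (hF1 : ∀ i < ℓ, coeff (R := K) 1 (F i) ≠ 0)
    (hBell : f j = X * g) (hBell' : F j = X * G)
    (h : K⟦X⟧) (hhs : ∀ n, n % ℓ ≠ 1 → coeff (R := K) n h = 0) (hh1 : coeff (R := K) 1 h ≠ 0)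
    (hhl : h ^ ℓ = ∏ i ∈ Finset.range ℓ, f i)
    (q : ℕ → K⟦X⟧) (hq : ∀ i < ℓ, f i = q i * h)
    (d e : ℕ → ℕ → K)
    (hd : ∀ n k, d n k = mrEntry ℓ g f n k)
    (he : ∀ n k, e n k = mrEntry ℓ G F n k) :
    (∀ n k, ∑ j' ∈ Finset.range (n + 1), d n j' * e j' k
      = mrEntry ℓ (g * psComp G h) (fun i => q i * psComp (F i) h) n k) ∧
    q j * psComp (F j) h = X * (g * psComp G h) := by
  have hh0 : constantCoeff (R := K) h = 0 := by
    have := hhs 0 (by rw [Nat.zero_mod]; omega)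
    simpa using this
  have hne : h ≠ 0 := fun h0 => hh1 (by rw [h0, map_zero])
  -- products of f in terms of q and h
  have hprod : ∀ r ≤ ℓ, ∏ i ∈ range r, f i = (∏ i ∈ range r, q i) * h ^ r := by
    intro r hr
    rw [Finset.prod_congr rfl (fun i hi => hq i (by
      rw [Finset.mem_range] at hi; omega)), Finset.prod_mul_distrib, Finset.prod_const,
      Finset.card_range]
  have hq1 : ∏ i ∈ range ℓ, q i = 1 := by
    have h1 : (∏ i ∈ range ℓ, q i) * h ^ ℓ = 1 * h ^ ℓ := by
      rw [one_mul, ← hprod ℓ le_rfl, ← hhl]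
    exact mul_right_cancel₀ (pow_ne_zero ℓ hne) h1
  have hpowsplit : ∀ j' : ℕ, h ^ (j' % ℓ) * (h ^ ℓ) ^ (j' / ℓ) = h ^ j' := by
    intro j'
    rw [← pow_mul, ← pow_add]
    congr 1
    exact Nat.mod_add_div j' ℓ
  -- support facts
  have hFsupp : ∀ i < ℓ, Supp ℓ 1 (F i) := by
    intro i hi n hn
    have h1 : (1 : ℕ) % ℓ = 1 := Nat.mod_eq_of_lt (by omega)
    rw [h1] at hn
    exact hF i hi n hn
  have hGsupp : Supp ℓ 0 G := by
    intro n hn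
    rw [Nat.zero_mod] at hn
    exact hG n (fun hdvd => hn (Nat.mod_eq_zero_of_dvd hdvd))
  constructor
  · intro n k
    set m := k % ℓ with hm
    set Q := k / ℓ with hQ
    have hmlt : m < ℓ := Nat.mod_lt k (by omega)
    set C := G * (∏ i ∈ range m, F i) * (∏ i ∈ range ℓ, F i) ^ Q with hC
    set P := ∏ i ∈ range m, q i with hP
    have hSuppC : Supp ℓ m C := by
      have h1 : Supp ℓ (0 + m + 0) C :=
        (hGsupp.mul (Supp.prodF hFsupp m (by omega))).mul
          (((Supp.prodF hFsupp ℓ le_rfl).congr'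
            (by rw [Nat.mod_self, Nat.zero_mod])).pow Q)
      exact h1.congr' (by norm_num)
    have step1 : ∀ j' ∈ range (n + 1),
        d n j' * e j' k = coeff (R := K) n (g * P * h ^ j') * coeff (R := K) j' C := by
      intro j' _
      rw [hd, he]
      show coeff (R := K) n (g * (∏ i ∈ range (j' % ℓ), f i) * (∏ i ∈ range ℓ, f i) ^ (j' / ℓ))
          * coeff (R := K) j' C = _
      by_cases hc : coeff (R := K) j' C = 0
      · rw [hc, mul_zero, mul_zero]
      · have hmod : j' % ℓ = m := by
          by_contra hne'
          exact hc (hSuppC j' (by rw [Nat.mod_eq_of_lt hmlt]; exact hne'))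
        congr 1
        rw [hprod _ (le_of_lt (Nat.mod_lt j' (by omega))), ← hhl, hmod, ← hP]
        rw [show g * (P * h ^ m) * (h ^ ℓ) ^ (j' / ℓ)
            = g * P * (h ^ (j' % ℓ) * (h ^ ℓ) ^ (j' / ℓ)) by rw [hmod]; ring, hpowsplit]
    have step2 : coeff (R := K) n (g * P * psComp C h)
        = ∑ j' ∈ range (n + 1), coeff (R := K) n (g * P * h ^ j') * coeff (R := K) j' C := by
      have hlow : coeff (R := K) n (g * P * psComp C h) = coeff (R := K) n
          (g * P * ∑ j' ∈ range (n + 1), PowerSeries.C (R := K) (coeff (R := K) j' C) * h ^ j') := by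
        apply coeff_mul_congr_right
        intro r hr
        rw [map_sum, psComp, coeff_mk]
        simp_rw [coeff_C_mul]
        apply Finset.sum_subset (Finset.range_subset_range.mpr (by omega))
        intro k' _ hk'
        rw [coeff_pow_eq_zero' hh0 (by simp at hk'; omega), mul_zero]
      rw [hlow, Finset.mul_sum, map_sum]
      refine Finset.sum_congr rfl fun j' _ => ?_
      rw [show g * P * (PowerSeries.C (R := K) (coeff (R := K) j' C) * h ^ j')
          = PowerSeries.C (R := K) (coeff (R := K) j' C) * (g * P * h ^ j') by ring, coeff_C_mul, mul_comm]
    have hφ : psComp C h = psComp G h * (∏ i ∈ range m, psComp (F i) h)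
        * (∏ i ∈ range ℓ, psComp (F i) h) ^ Q := by
      show (psCompHom h hh0) C = (psCompHom h hh0) G
        * (∏ i ∈ range m, (psCompHom h hh0) (F i))
        * (∏ i ∈ range ℓ, (psCompHom h hh0) (F i)) ^ Q
      rw [hC, map_mul, map_mul, map_pow, map_prod, map_prod]
    have hser : g * P * psComp C h
        = (g * psComp G h) * (∏ i ∈ range m, (q i * psComp (F i) h))
          * (∏ i ∈ range ℓ, (q i * psComp (F i) h)) ^ Q := by
      rw [hφ, Finset.prod_mul_distrib, Finset.prod_mul_distrib, hq1, one_mul, ← hP]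
      ring
    rw [Finset.sum_congr rfl step1, ← step2, hser]
    rfl
  · rw [hBell', psComp_mul hh0, psComp_X hh0,
      show q j * (h * psComp G h) = q j * h * psComp G h by ring, ← hq j hj, hBell]
    ring
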